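/- Let C be a graded coalgebra with dim C_0 = 1 and finite-dimensional components, M_* = (1)^⊥ ⊂ C^{*g} the augmentation ideal of the dual algebra. Then the orthogonal of C_{deg_p ≤ n} = K·1 ⊕ Ker(Δ̃^n) in the duality between C and C^{*g} equals M_*^{n+1}. -/

import Mathlib

open Module TensorProduct

variable (K : Type) [Field K] (C : Type) [AddCommGroup C] [Module K C]

/-- Left-nested tensor powers: `TP 0 = C`, `TP (n+1) = TP n ⊗ C`, so `TP n = C^{⊗(n+1)}`. -/
noncomputable def TPM : ℕ → ModuleCat K
  | 0 => ModuleCat.of K C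
  | n + 1 => ModuleCat.of K (TPM n ⊗[K] C)

/-- The underlying type of `TPM`. -/
noncomputable abbrev TP (n : ℕ) : Type := TPM K C n

/-- Iterates of a map `D : C → C ⊗ C`: `iterD n = Δ̃ⁿ` when `D = Δ̃`. -/
noncomputable def iterD (D : C →ₗ[K] C ⊗[K] C) : (n : ℕ) → (C →ₗ[K] TP K C n)
  | 0 => LinearMap.id
  | n + 1 => (TensorProduct.map (iterD D n) (LinearMap.id : C →ₗ[K] C)).comp D

/-- The degree-`n` component of the graded dual. -/
def dualComponent (𝒞 : ℕ → Submodule K C) (n : ℕ) : Submodule K (Module.Dual K C) :=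
  ⨅ m ∈ {m : ℕ | m ≠ n}, Submodule.dualAnnihilator (𝒞 m)

/-- The graded dual `C^{*g} = ⊕ₙ (C_n)*`. -/
def gradedDual (𝒞 : ℕ → Submodule K C) : Submodule K (Module.Dual K C) :=
  ⨆ n, dualComponent K C 𝒞 n

variable [Coalgebra K C]

/-- The reduced coproduct `Δ̃(x) = Δ(x) − e ⊗ x − x ⊗ e`. -/
noncomputable def redComul (e : C) : C →ₗ[K] C ⊗[K] C :=
  CoalgebraStruct.comul - TensorProduct.mk K C C e - (TensorProduct.mk K C C).flip e

/-- The image of `p ⊗ q` inside `C ⊗ C`. -/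
noncomputable def tensorSub (p q : Submodule K C) : Submodule K (C ⊗[K] C) :=
  LinearMap.range (TensorProduct.map p.subtype q.subtype)

/-- The convolution product on `C*`, `(f g)(x) = (f ⊗ g)(Δ x)`, as a bilinear map. -/
noncomputable def convL : Module.Dual K C →ₗ[K] Module.Dual K C →ₗ[K] Module.Dual K C :=
  LinearMap.mk₂ K
    (fun f g => (LinearMap.mul' K K) ∘ₗ (TensorProduct.map f g) ∘ₗ
      (CoalgebraStruct.comul (R := K) (A := C)))
    (fun f₁ f₂ g => by simp only [TensorProduct.map_add_left, LinearMap.add_comp, LinearMap.comp_add])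
    (fun c f g => by simp only [TensorProduct.map_smul_left, LinearMap.smul_comp, LinearMap.comp_smul])
    (fun f g₁ g₂ => by simp only [TensorProduct.map_add_right, LinearMap.add_comp, LinearMap.comp_add])
    (fun c f g => by simp only [TensorProduct.map_smul_right, LinearMap.smul_comp, LinearMap.comp_smul])

/-- Powers `M_*^{n+1}` of the augmentation ideal `M_* = (1)^⊥` of `C^{*g}`:
`Mpow 0 = M_*`, `Mpow (n+1) = M_* · Mpow n` (products for the convolution). -/
noncomputable def Mpow (𝒞 : ℕ → Submodule K C) (one : C) : ℕ → Submodule K (Module.Dual K C)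
  | 0 => gradedDual K C 𝒞 ⊓ Submodule.dualAnnihilator (Submodule.span K {one})
  | n + 1 => Submodule.map₂ (convL K C)
      (gradedDual K C 𝒞 ⊓ Submodule.dualAnnihilator (Submodule.span K {one}))
      (Mpow 𝒞 one n)


section Mine
set_option linter.unusedSectionVars false
set_option linter.unnecessarySimpa false

variable (𝒞 : ℕ → Submodule K C) [DirectSum.Decomposition 𝒞]

/-- projection onto degree-m component, as endomorphism of C -/
noncomputable def proj (m : ℕ) : C →ₗ[K] C :=
  (𝒞 m).subtype ∘ₗ (DirectSum.component K ℕ (fun i => (𝒞 i)) m) ∘ₗ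
    (DirectSum.decomposeLinearEquiv 𝒞).toLinearMap

theorem proj_mem (m : ℕ) (x : C) : proj K C 𝒞 m x ∈ 𝒞 m := by
  exact Submodule.coe_mem _

theorem proj_of_mem_same {m : ℕ} {x : C} (h : x ∈ 𝒞 m) : proj K C 𝒞 m x = x := by
  simp [proj, DirectSum.component]
  exact DirectSum.decompose_of_mem_same 𝒞 h

theorem proj_of_mem_ne {m j : ℕ} {x : C} (h : x ∈ 𝒞 j) (hne : j ≠ m) : proj K C 𝒞 m x = 0 := by
  show (((DirectSum.decompose 𝒞) x) m : C) = 0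
  exact DirectSum.decompose_of_mem_ne 𝒞 h hne

theorem exists_sum_proj (x : C) : ∃ s : Finset ℕ,
    (∑ m ∈ s, proj K C 𝒞 m x = x) ∧ ∀ m ∉ s, proj K C 𝒞 m x = 0 := by
  classical
  refine ⟨(DirectSum.decompose 𝒞 x).support, ?_, ?_⟩
  · exact DirectSum.sum_support_decompose 𝒞 x
  · intro m hm
    simp only [DFinsupp.mem_support_iff, not_not] at hm
    show (((DirectSum.decompose 𝒞) x) m : C) = 0
    rw [hm]; rfl



variable {W : Type} [AddCommGroup W] [Module K W]

theorem tensorSub_apply_mem (f : C ⊗[K] C →ₗ[K] W) {p q : Submodule K C} {N : Submodule K W}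
    (h : ∀ a ∈ p, ∀ b ∈ q, f (a ⊗ₜ[K] b) ∈ N) : ∀ t ∈ tensorSub K C p q, f t ∈ N := by
  rintro t ⟨s, rfl⟩
  induction s using TensorProduct.induction_on with
  | zero => simpa using N.zero_mem
  | tmul a b => simpa using h a a.2 b b.2
  | add u v hu hv => simpa using N.add_mem hu hv

theorem tensorSub_span_left {e : C} {q : Submodule K C} :
    ∀ t ∈ tensorSub K C (Submodule.span K {e}) q, ∃ y ∈ q, t = e ⊗ₜ[K] y := by
  rintro t ⟨s, rfl⟩
  induction s using TensorProduct.induction_on with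
  | zero => exact ⟨0, q.zero_mem, by simp⟩
  | tmul a b =>
    obtain ⟨c, hc⟩ := Submodule.mem_span_singleton.mp a.2
    exact ⟨c • (b : C), q.smul_mem c b.2, by
      simp [← hc, TensorProduct.smul_tmul, TensorProduct.tmul_smul]⟩
  | add u v hu hv =>
    obtain ⟨y1, hy1, e1⟩ := hu; obtain ⟨y2, hy2, e2⟩ := hv
    exact ⟨y1 + y2, q.add_mem hy1 hy2, by simp [e1, e2, TensorProduct.tmul_add]⟩

theorem tensorSub_span_right {e : C} {p : Submodule K C} :
    ∀ t ∈ tensorSub K C p (Submodule.span K {e}), ∃ y ∈ p, t = y ⊗ₜ[K] e := by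
  rintro t ⟨s, rfl⟩
  induction s using TensorProduct.induction_on with
  | zero => exact ⟨0, p.zero_mem, by simp⟩
  | tmul a b =>
    obtain ⟨c, hc⟩ := Submodule.mem_span_singleton.mp b.2
    exact ⟨c • (a : C), p.smul_mem c a.2, by
      simp [← hc, TensorProduct.smul_tmul, TensorProduct.tmul_smul]⟩
  | add u v hu hv =>
    obtain ⟨y1, hy1, e1⟩ := hu; obtain ⟨y2, hy2, e2⟩ := hv
    exact ⟨y1 + y2, p.add_mem hy1 hy2, by simp [e1, e2, TensorProduct.add_tmul]⟩



/-- `Fc (a ⊗ b) = ε(a) • b` -/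
noncomputable def Fc : C ⊗[K] C →ₗ[K] C :=
  (TensorProduct.lid K C).toLinearMap ∘ₗ (Coalgebra.counit (R := K)).rTensor C

/-- `Gc (a ⊗ b) = ε(b) • a` -/
noncomputable def Gc : C ⊗[K] C →ₗ[K] C :=
  (TensorProduct.rid K C).toLinearMap ∘ₗ (Coalgebra.counit (R := K)).lTensor C

@[simp] theorem Fc_tmul (a b : C) : Fc K C (a ⊗ₜ[K] b) = Coalgebra.counit (R := K) a • b := by
  simp [Fc]

@[simp] theorem Gc_tmul (a b : C) : Gc K C (a ⊗ₜ[K] b) = Coalgebra.counit (R := K) b • a := by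
  simp [Gc]

theorem Fc_comul (x : C) : Fc K C (CoalgebraStruct.comul (R := K) x) = x := by
  simp [Fc]

theorem Gc_comul (x : C) : Gc K C (CoalgebraStruct.comul (R := K) x) = x := by
  simp [Gc]

theorem counit_one_eq {one : C} (hone : CoalgebraStruct.comul (R := K) one = one ⊗ₜ[K] one)
    (hone_ne : one ≠ 0) : Coalgebra.counit (R := K) one = 1 := by
  have h := Fc_comul K C one
  rw [hone, Fc_tmul] at h
  by_contra hne
  have : (Coalgebra.counit (R := K) one - 1) • one = 0 := by
    rw [sub_smul, one_smul, h, sub_self]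
  rcases smul_eq_zero.mp this with h' | h'
  · exact hne (sub_eq_zero.mp h')
  · exact hone_ne h'



theorem tensorSub_mono {p p' q q' : Submodule K C} (h1 : p ≤ p') (h2 : q ≤ q') :
    tensorSub K C p q ≤ tensorSub K C p' q' := by
  rintro t ⟨s, rfl⟩
  induction s using TensorProduct.induction_on with
  | zero => simpa using (tensorSub K C p' q').zero_mem
  | tmul a b => exact ⟨(⟨a, h1 a.2⟩ : p') ⊗ₜ[K] (⟨b, h2 b.2⟩ : q'), rfl⟩
  | add u v hu hv => simpa using (tensorSub K C p' q').add_mem hu hv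

theorem czero_eq (𝒞 : ℕ → Submodule K C) [FiniteDimensional K (𝒞 0)]
    (h0 : Module.finrank K (𝒞 0) = 1) {one : C} (hone0 : one ∈ 𝒞 0) (hone_ne : one ≠ 0) :
    𝒞 0 = Submodule.span K {one} := by
  have hle : Submodule.span K {one} ≤ 𝒞 0 := by
    rw [Submodule.span_singleton_le_iff_mem]; exact hone0
  refine (Submodule.eq_of_le_of_finrank_le hle ?_).symm
  rw [h0, finrank_span_singleton hone_ne]


variable (𝒞 : ℕ → Submodule K C) [DirectSum.Decomposition 𝒞] [∀ n, FiniteDimensional K (𝒞 n)]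
variable {one : C}

theorem comul_homog
    (hcomul : ∀ n : ℕ, ∀ x ∈ 𝒞 n,
      CoalgebraStruct.comul (R := K) x
        ∈ ⨆ p ∈ Finset.HasAntidiagonal.antidiagonal n, tensorSub K C (𝒞 p.1) (𝒞 p.2))
    (h0 : Module.finrank K (𝒞 0) = 1)
    (hone : CoalgebraStruct.comul (R := K) one = one ⊗ₜ[K] one)
    (hone0 : one ∈ 𝒞 0) (hone_ne : one ≠ 0)
    {m : ℕ} (hm : m ≠ 0) {x : C} (hx : x ∈ 𝒞 m) :
    Coalgebra.counit (R := K) x = 0 ∧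
      redComul K C one x ∈ ⨆ p ∈ Finset.filter (fun p : ℕ × ℕ => p.1 ≠ 0 ∧ p.2 ≠ 0)
        (Finset.HasAntidiagonal.antidiagonal m), tensorSub K C (𝒞 p.1) (𝒞 p.2) := by
  classical
  obtain ⟨μ, hμ⟩ := (Submodule.mem_iSup_finset_iff_exists_sum _ _).mp (hcomul m x hx)
  have hmemF : ∀ p : ℕ × ℕ, Fc K C ((μ p : C ⊗[K] C)) ∈ 𝒞 p.2 := fun p =>
    tensorSub_apply_mem K C _ (fun a _ b hb => by simpa using Submodule.smul_mem _ _ hb) _ (μ p).2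
  have hmemG : ∀ p : ℕ × ℕ, Gc K C ((μ p : C ⊗[K] C)) ∈ 𝒞 p.1 := fun p =>
    tensorSub_apply_mem K C _ (fun a ha b _ => by simpa using Submodule.smul_mem _ _ ha) _ (μ p).2
  have hFx : ∑ p ∈ Finset.HasAntidiagonal.antidiagonal m, Fc K C (μ p : C ⊗[K] C) = x := by
    rw [← map_sum, hμ, Fc_comul]
  have hGx : ∑ p ∈ Finset.HasAntidiagonal.antidiagonal m, Gc K C (μ p : C ⊗[K] C) = x := by
    rw [← map_sum, hμ, Gc_comul]
  have hpts : ∀ p p0 : ℕ × ℕ, p ∈ Finset.HasAntidiagonal.antidiagonal m → p0 ∈ Finset.HasAntidiagonal.antidiagonal m →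
      p ≠ p0 → p.2 ≠ p0.2 := by
    rintro p p0 hp hp0 hne rfl'
    apply hne
    rw [Finset.HasAntidiagonal.mem_antidiagonal] at hp hp0
    exact Prod.ext (by omega) rfl'
  have keyF : ∀ p0 ∈ Finset.HasAntidiagonal.antidiagonal m, proj K C 𝒞 p0.2 x = Fc K C (μ p0 : C ⊗[K] C) := by
    intro p0 hp0
    rw [← hFx, map_sum, Finset.sum_eq_single_of_mem p0 hp0]
    · exact proj_of_mem_same K C 𝒞 (hmemF p0)
    · intro p hp hne
      exact proj_of_mem_ne K C 𝒞 (hmemF p) (hpts p p0 hp hp0 hne)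
  have keyG : ∀ p0 ∈ Finset.HasAntidiagonal.antidiagonal m, proj K C 𝒞 p0.1 x = Gc K C (μ p0 : C ⊗[K] C) := by
    intro p0 hp0
    rw [← hGx, map_sum, Finset.sum_eq_single_of_mem p0 hp0]
    · exact proj_of_mem_same K C 𝒞 (hmemG p0)
    · intro p hp hne
      refine proj_of_mem_ne K C 𝒞 (hmemG p) ?_
      have := hpts p p0 hp hp0 hne
      rw [Finset.HasAntidiagonal.mem_antidiagonal] at hp hp0
      omega
  have h0m : ((0, m) : ℕ × ℕ) ∈ Finset.HasAntidiagonal.antidiagonal m := by simp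
  have hm0 : ((m, 0) : ℕ × ℕ) ∈ Finset.HasAntidiagonal.antidiagonal m := by simp
  have hcone := counit_one_eq K C hone hone_ne
  -- identify μ (0, m)
  have hμ0m : (μ (0, m) : C ⊗[K] C) = one ⊗ₜ[K] x := by
    have hmem : (μ (0, m) : C ⊗[K] C) ∈ tensorSub K C (Submodule.span K {one}) (𝒞 m) :=
      tensorSub_mono K C (le_of_eq (czero_eq K C 𝒞 h0 hone0 hone_ne)) le_rfl (μ (0, m)).2
    obtain ⟨y, hy, hy2⟩ := tensorSub_span_left K C _ hmem
    have : Fc K C (μ (0, m) : C ⊗[K] C) = y := by rw [hy2, Fc_tmul, hcone, one_smul]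
    rw [← keyF (0, m) h0m] at this
    rw [hy2, ← this, proj_of_mem_same K C 𝒞 hx]
  have hμm0 : (μ (m, 0) : C ⊗[K] C) = x ⊗ₜ[K] one := by
    have hmem : (μ (m, 0) : C ⊗[K] C) ∈ tensorSub K C (𝒞 m) (Submodule.span K {one}) :=
      tensorSub_mono K C le_rfl (le_of_eq (czero_eq K C 𝒞 h0 hone0 hone_ne)) (μ (m, 0)).2
    obtain ⟨y, hy, hy2⟩ := tensorSub_span_right K C _ hmem
    have : Gc K C (μ (m, 0) : C ⊗[K] C) = y := by rw [hy2, Gc_tmul, hcone, one_smul]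
    rw [← keyG (m, 0) hm0] at this
    rw [hy2, ← this, proj_of_mem_same K C 𝒞 hx]
  -- counit vanishes on x
  have hcx : Coalgebra.counit (R := K) x = 0 := by
    have h1 : proj K C 𝒞 0 x = 0 := proj_of_mem_ne K C 𝒞 hx hm
    have h2 := keyF (m, 0) hm0
    rw [hμm0, Fc_tmul] at h2
    simp only [h1] at h2
    rcases smul_eq_zero.mp h2.symm with h | h
    · exact h
    · exact absurd h hone_ne
  refine ⟨hcx, ?_⟩
  -- second part
  have hne2 : ((0, m) : ℕ × ℕ) ≠ (m, 0) := by
    intro h; apply hm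
    have := congrArg Prod.fst h
    simpa using this.symm
  have hsum : redComul K C one x = ∑ p ∈ ((Finset.HasAntidiagonal.antidiagonal m).erase (0, m)).erase (m, 0),
      (μ p : C ⊗[K] C) := by
    have e1 : ∑ p ∈ Finset.HasAntidiagonal.antidiagonal m, (μ p : C ⊗[K] C)
        = ∑ p ∈ (Finset.HasAntidiagonal.antidiagonal m).erase (0, m), (μ p : C ⊗[K] C) + μ (0, m) :=
      (Finset.sum_erase_add _ _ h0m).symm
    have hm0' : ((m, 0) : ℕ × ℕ) ∈ (Finset.HasAntidiagonal.antidiagonal m).erase (0, m) :=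
      Finset.mem_erase.mpr ⟨Ne.symm hne2, hm0⟩
    have e2 : ∑ p ∈ (Finset.HasAntidiagonal.antidiagonal m).erase (0, m), (μ p : C ⊗[K] C)
        = ∑ p ∈ ((Finset.HasAntidiagonal.antidiagonal m).erase (0, m)).erase (m, 0), (μ p : C ⊗[K] C) + μ (m, 0) :=
      (Finset.sum_erase_add _ _ hm0').symm
    have : CoalgebraStruct.comul (R := K) x
        = ∑ p ∈ ((Finset.HasAntidiagonal.antidiagonal m).erase (0, m)).erase (m, 0), (μ p : C ⊗[K] C)
          + x ⊗ₜ[K] one + one ⊗ₜ[K] x := by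
      rw [← hμ, e1, e2, hμm0, hμ0m]
    simp only [redComul, LinearMap.sub_apply, this]
    simp only [TensorProduct.mk_apply, LinearMap.flip_apply, TensorProduct.mk_apply]
    abel
  rw [hsum]
  apply Submodule.sum_mem
  intro p hp
  rw [Finset.mem_erase, Finset.mem_erase] at hp
  obtain ⟨hpm0, hp0m, hpanti⟩ := hp
  have hmem : p ∈ Finset.filter (fun p : ℕ × ℕ => p.1 ≠ 0 ∧ p.2 ≠ 0) (Finset.HasAntidiagonal.antidiagonal m) := by
    rw [Finset.mem_filter]
    refine ⟨hpanti, ?_, ?_⟩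
    · intro h1; apply hp0m
      rw [Finset.HasAntidiagonal.mem_antidiagonal] at hpanti
      exact Prod.ext h1 (by omega)
    · intro h2; apply hpm0
      rw [Finset.HasAntidiagonal.mem_antidiagonal] at hpanti
      exact Prod.ext (by omega) h2
  exact Submodule.mem_iSup_of_mem p (Submodule.mem_iSup_of_mem hmem (μ p).2)

-- ## Convolution basics

theorem convL_apply (f g : Module.Dual K C) (x : C) :
    convL K C f g x = LinearMap.mul' K K
      (TensorProduct.map f g (CoalgebraStruct.comul (R := K) x)) := rfl

theorem convL_one {one : C} (hone : CoalgebraStruct.comul (R := K) one = one ⊗ₜ[K] one)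
    (f g : Module.Dual K C) : convL K C f g one = f one * g one := by
  rw [convL_apply, hone]
  simp [LinearMap.mul'_apply]

theorem convL_red {one : C} (f g : Module.Dual K C) (hf : f one = 0) (hg : g one = 0) (x : C) :
    convL K C f g x = LinearMap.mul' K K (TensorProduct.map f g (redComul K C one x)) := by
  rw [convL_apply]
  simp only [redComul, LinearMap.sub_apply, map_sub, TensorProduct.mk_apply,
    LinearMap.flip_apply, TensorProduct.mk_apply, TensorProduct.map_tmul, hf, hg,
    TensorProduct.zero_tmul, TensorProduct.tmul_zero, map_zero, sub_zero]

theorem mem_dualComponent_iff (𝒞 : ℕ → Submodule K C) {f : Module.Dual K C} {n : ℕ} :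
    f ∈ dualComponent K C 𝒞 n ↔ ∀ m, m ≠ n → ∀ x ∈ 𝒞 m, f x = 0 := by
  simp [dualComponent, Submodule.mem_iInf, Submodule.mem_dualAnnihilator, Set.mem_setOf_eq]

theorem eval_biSup_zero {M N : Type} [AddCommGroup M] [Module K M] [AddCommGroup N] [Module K N]
    (h : M →ₗ[K] N) {ι : Type} {P : ι → Prop} {T : ι → Submodule K M}
    (hker : ∀ i, P i → T i ≤ LinearMap.ker h) {x : M} (hx : x ∈ ⨆ i, ⨆ _ : P i, T i) :
    h x = 0 := by
  have : (⨆ i, ⨆ _ : P i, T i) ≤ LinearMap.ker h :=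
    iSup_le fun i => iSup_le fun hi => hker i hi
  exact this hx

section Conv
variable (𝒞 : ℕ → Submodule K C) [DirectSum.Decomposition 𝒞] [∀ n, FiniteDimensional K (𝒞 n)]

theorem conv_mem_dualComponent
    (hcomul : ∀ n : ℕ, ∀ x ∈ 𝒞 n,
      CoalgebraStruct.comul (R := K) x
        ∈ ⨆ p ∈ Finset.HasAntidiagonal.antidiagonal n, tensorSub K C (𝒞 p.1) (𝒞 p.2))
    {f g : Module.Dual K C} {p q : ℕ}
    (hf : f ∈ dualComponent K C 𝒞 p) (hg : g ∈ dualComponent K C 𝒞 q) :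
    convL K C f g ∈ dualComponent K C 𝒞 (p + q) := by
  rw [mem_dualComponent_iff] at hf hg ⊢
  intro m hm x hx
  rw [convL_apply]
  refine eval_biSup_zero K (h := LinearMap.mul' K K ∘ₗ TensorProduct.map f g) ?_ (hcomul m x hx)
  intro r hr
  rw [Finset.HasAntidiagonal.mem_antidiagonal] at hr
  intro t ht
  rw [LinearMap.mem_ker]
  have : ∀ a ∈ 𝒞 r.1, ∀ b ∈ 𝒞 r.2,
      (LinearMap.mul' K K ∘ₗ TensorProduct.map f g) (a ⊗ₜ[K] b) ∈ (⊥ : Submodule K K) := by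
    intro a ha b hb
    simp only [LinearMap.comp_apply, TensorProduct.map_tmul, LinearMap.mul'_apply,
      Submodule.mem_bot]
    rcases ne_or_eq r.1 p with h1 | h1
    · rw [hf r.1 h1 a ha, zero_mul]
    · have h2 : r.2 ≠ q := by omega
      rw [hg r.2 h2 b hb, mul_zero]
  simpa using tensorSub_apply_mem K C _ this t ht

theorem dualComponent_le_gradedDual (n : ℕ) :
    dualComponent K C 𝒞 n ≤ gradedDual K C 𝒞 := le_iSup _ n

theorem conv_mem_gradedDual
    (hcomul : ∀ n : ℕ, ∀ x ∈ 𝒞 n,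
      CoalgebraStruct.comul (R := K) x
        ∈ ⨆ p ∈ Finset.HasAntidiagonal.antidiagonal n, tensorSub K C (𝒞 p.1) (𝒞 p.2))
    {f g : Module.Dual K C}
    (hf : f ∈ gradedDual K C 𝒞) (hg : g ∈ gradedDual K C 𝒞) :
    convL K C f g ∈ gradedDual K C 𝒞 := by
  refine Submodule.iSup_induction _ (motive := fun f => convL K C f g ∈ gradedDual K C 𝒞) hf ?_ ?_ ?_
  · intro p f' hf'
    refine Submodule.iSup_induction _ (motive := fun g => convL K C f' g ∈ gradedDual K C 𝒞) hg ?_ ?_ ?_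
    · intro q g' hg'
      exact dualComponent_le_gradedDual K C 𝒞 (p + q)
        (conv_mem_dualComponent K C 𝒞 hcomul hf' hg')
    · simp only [map_zero]; exact Submodule.zero_mem _
    · intro x y hx hy; rw [map_add]; exact Submodule.add_mem _ hx hy
  · show convL K C 0 g ∈ gradedDual K C 𝒞
    rw [LinearMap.map_zero₂]; exact Submodule.zero_mem _
  · intro x y hx hy
    show convL K C (x + y) g ∈ gradedDual K C 𝒞
    rw [LinearMap.map_add₂]; exact Submodule.add_mem _ hx hy

end Conv

-- ## Mstar and graded projections of duals

noncomputable abbrev Mstar (𝒞 : ℕ → Submodule K C) (one : C) : Submodule K (Module.Dual K C) :=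
  gradedDual K C 𝒞 ⊓ Submodule.dualAnnihilator (Submodule.span K {one})

theorem Mstar_apply_one {𝒞 : ℕ → Submodule K C} {one : C} {f : Module.Dual K C}
    (hf : f ∈ Mstar K C 𝒞 one) : f one = 0 :=
  (Submodule.mem_dualAnnihilator f).mp hf.2 one (Submodule.mem_span_singleton_self one)

variable (𝒞 : ℕ → Submodule K C) [DirectSum.Decomposition 𝒞] [∀ n, FiniteDimensional K (𝒞 n)]

theorem dualComponent_le_Mstar {m : ℕ} (hm : m ≠ 0) {one : C} (hone0 : one ∈ 𝒞 0) :
    dualComponent K C 𝒞 m ≤ Mstar K C 𝒞 one := by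
  intro f hf
  refine Submodule.mem_inf.mpr ⟨dualComponent_le_gradedDual K C 𝒞 m hf, ?_⟩
  rw [Submodule.mem_dualAnnihilator]
  intro w hw
  obtain ⟨c, rfl⟩ := Submodule.mem_span_singleton.mp hw
  rw [map_smul, (mem_dualComponent_iff K C 𝒞).mp hf 0 (Ne.symm hm) one hone0, smul_zero]

theorem comp_proj_mem (f : Module.Dual K C) (m : ℕ) :
    f ∘ₗ proj K C 𝒞 m ∈ dualComponent K C 𝒞 m := by
  rw [mem_dualComponent_iff]
  intro j hj x hx
  simp only [LinearMap.comp_apply]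
  rw [proj_of_mem_ne K C 𝒞 hx hj, map_zero]

theorem comp_comp_proj_same {f : Module.Dual K C} {j : ℕ} (hf : f ∈ dualComponent K C 𝒞 j) :
    f ∘ₗ proj K C 𝒞 j = f := by
  ext x
  obtain ⟨s, hsum, hout⟩ := exists_sum_proj K C 𝒞 x
  rw [mem_dualComponent_iff] at hf
  simp only [LinearMap.comp_apply]
  by_cases hj : j ∈ s
  · conv_rhs => rw [← hsum]
    rw [map_sum, Finset.sum_eq_single_of_mem j hj]
    intro i _ hij
    exact hf i hij _ (proj_mem K C 𝒞 i x)
  · rw [hout j hj, map_zero]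
    conv_rhs => rw [← hsum]
    rw [map_sum, Finset.sum_eq_zero]
    intro i hi
    exact hf i (fun h => hj (h ▸ hi)) _ (proj_mem K C 𝒞 i x)

theorem comp_comp_proj_ne {f : Module.Dual K C} {j m : ℕ} (hf : f ∈ dualComponent K C 𝒞 j)
    (hjm : j ≠ m) : f ∘ₗ proj K C 𝒞 m = 0 := by
  ext x
  exact (mem_dualComponent_iff K C 𝒞).mp hf m (Ne.symm hjm) _ (proj_mem K C 𝒞 m x)

theorem gradedDual_decompose {f : Module.Dual K C} (hf : f ∈ gradedDual K C 𝒞) :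
    ∃ s : Finset ℕ, f = ∑ j ∈ s, f ∘ₗ proj K C 𝒞 j := by
  obtain ⟨s, hs⟩ := (Submodule.mem_iSup_iff_exists_finset).mp hf
  obtain ⟨μ, hμ⟩ := (Submodule.mem_iSup_finset_iff_exists_sum _ _).mp hs
  refine ⟨s, ?_⟩
  have : ∀ j ∈ s, f ∘ₗ proj K C 𝒞 j = (μ j : Module.Dual K C) := by
    intro j hj
    rw [← hμ]
    have : (∑ i ∈ s, (μ i : Module.Dual K C)) ∘ₗ proj K C 𝒞 j
        = ∑ i ∈ s, (μ i : Module.Dual K C) ∘ₗ proj K C 𝒞 j := by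
      ext x; simp [LinearMap.sum_apply]
    rw [this, Finset.sum_eq_single_of_mem j hj]
    · exact comp_comp_proj_same K C 𝒞 (μ j).2
    · intro i _ hij
      exact comp_comp_proj_ne K C 𝒞 (μ i).2 hij
  rw [Finset.sum_congr rfl this, hμ]

theorem Mstar_comp_proj {one : C} [FiniteDimensional K (𝒞 0)]
    (h0 : Module.finrank K (𝒞 0) = 1) (hone0 : one ∈ 𝒞 0) (hone_ne : one ≠ 0)
    {f : Module.Dual K C} (hf : f ∈ Mstar K C 𝒞 one) (m : ℕ) :
    f ∘ₗ proj K C 𝒞 m ∈ Mstar K C 𝒞 one := by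
  by_cases hm : m = 0
  · subst hm
    have : f ∘ₗ proj K C 𝒞 0 = 0 := by
      ext x
      have hmem : proj K C 𝒞 0 x ∈ Submodule.span K {one} := by
        rw [← czero_eq K C 𝒞 h0 hone0 hone_ne]
        exact proj_mem K C 𝒞 0 x
      exact (Submodule.mem_dualAnnihilator f).mp hf.2 _ hmem
    rw [this]; exact Submodule.zero_mem _
  · exact dualComponent_le_Mstar K C 𝒞 hm hone0 (comp_proj_mem K C 𝒞 f m)

-- ## graded commutation of comul with projections

theorem tensorSub_map_eq (f g : C →ₗ[K] C) {P Q : Submodule K C}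
    (hp : ∀ a ∈ P, f a = a) (hq : ∀ b ∈ Q, g b = b) :
    ∀ t ∈ tensorSub K C P Q, TensorProduct.map f g t = t := by
  rintro t ⟨u, rfl⟩
  induction u using TensorProduct.induction_on with
  | zero => simp
  | tmul a b => simp [hp a a.2, hq b b.2]
  | add u v hu hv => simp only [map_add, hu, hv]

theorem tensorSub_map_zero_left (f g : C →ₗ[K] C) {P Q : Submodule K C}
    (hp : ∀ a ∈ P, f a = 0) :
    ∀ t ∈ tensorSub K C P Q, TensorProduct.map f g t = 0 := by
  rintro t ⟨u, rfl⟩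
  induction u using TensorProduct.induction_on with
  | zero => simp
  | tmul a b => simp [hp a a.2]
  | add u v hu hv => simp only [map_add, hu, hv, add_zero]

theorem tensorSub_map_zero_right (f g : C →ₗ[K] C) {P Q : Submodule K C}
    (hq : ∀ b ∈ Q, g b = 0) :
    ∀ t ∈ tensorSub K C P Q, TensorProduct.map f g t = 0 := by
  rintro t ⟨u, rfl⟩
  induction u using TensorProduct.induction_on with
  | zero => simp
  | tmul a b => simp [hq b b.2]
  | add u v hu hv => simp only [map_add, hu, hv, add_zero]

theorem sum_proj_tensor {s : Finset (ℕ × ℕ)} {j : ℕ} (hs : ∀ p ∈ s, p.1 + p.2 = j)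
    {t : C ⊗[K] C} (ht : t ∈ ⨆ p ∈ s, tensorSub K C (𝒞 p.1) (𝒞 p.2)) (m : ℕ) :
    ∑ p ∈ Finset.HasAntidiagonal.antidiagonal m,
        TensorProduct.map (proj K C 𝒞 p.1) (proj K C 𝒞 p.2) t
      = if j = m then t else 0 := by
  classical
  obtain ⟨μ, hμ⟩ := (Submodule.mem_iSup_finset_iff_exists_sum _ _).mp ht
  have inner : ∀ p : ℕ × ℕ, ∀ q ∈ s,
      TensorProduct.map (proj K C 𝒞 p.1) (proj K C 𝒞 p.2) (μ q : C ⊗[K] C)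
        = if q = p then (μ q : C ⊗[K] C) else 0 := by
    intro p q _
    by_cases h : q = p
    · subst h
      rw [if_pos rfl]
      exact tensorSub_map_eq K C _ _ (fun a ha => proj_of_mem_same K C 𝒞 ha)
        (fun b hb => proj_of_mem_same K C 𝒞 hb) _ (μ q).2
    · rw [if_neg h]
      rcases (show q.1 ≠ p.1 ∨ q.2 ≠ p.2 by
        by_contra hc
        push_neg at hc
        exact h (Prod.ext hc.1 hc.2)) with h1 | h2
      · exact tensorSub_map_zero_left K C _ _
          (fun a ha => proj_of_mem_ne K C 𝒞 ha h1) _ (μ q).2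
      · exact tensorSub_map_zero_right K C _ _
          (fun b hb => proj_of_mem_ne K C 𝒞 hb h2) _ (μ q).2
  calc ∑ p ∈ Finset.HasAntidiagonal.antidiagonal m,
        TensorProduct.map (proj K C 𝒞 p.1) (proj K C 𝒞 p.2) t
      = ∑ p ∈ Finset.HasAntidiagonal.antidiagonal m, ∑ q ∈ s,
          TensorProduct.map (proj K C 𝒞 p.1) (proj K C 𝒞 p.2) (μ q : C ⊗[K] C) := by
        rw [← hμ]; simp [map_sum]
    _ = ∑ q ∈ s, ∑ p ∈ Finset.HasAntidiagonal.antidiagonal m,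
          (if q = p then (μ q : C ⊗[K] C) else 0) := by
        rw [Finset.sum_comm]
        refine Finset.sum_congr rfl fun q hq => Finset.sum_congr rfl fun p _ => inner p q hq
    _ = ∑ q ∈ s, (if q ∈ Finset.HasAntidiagonal.antidiagonal m then (μ q : C ⊗[K] C) else 0) := by
        refine Finset.sum_congr rfl fun q _ => ?_
        rw [Finset.sum_ite_eq]
    _ = if j = m then t else 0 := by
        by_cases hjm : j = m
        · subst hjm
          rw [if_pos rfl, ← hμ]
          refine Finset.sum_congr rfl fun q hq => ?_
          rw [if_pos (Finset.HasAntidiagonal.mem_antidiagonal.mpr (hs q hq))]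
        · rw [if_neg hjm]
          refine Finset.sum_eq_zero fun q hq => ?_
          rw [if_neg]
          rw [Finset.HasAntidiagonal.mem_antidiagonal]
          rw [hs q hq]
          exact hjm

-- ## commutation of comul / redComul / iterD with projections

theorem comul_proj_apply
    (hcomul : ∀ n : ℕ, ∀ x ∈ 𝒞 n,
      CoalgebraStruct.comul (R := K) x
        ∈ ⨆ p ∈ Finset.HasAntidiagonal.antidiagonal n, tensorSub K C (𝒞 p.1) (𝒞 p.2))
    (m : ℕ) (x : C) :
    CoalgebraStruct.comul (R := K) (proj K C 𝒞 m x)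
      = ∑ p ∈ Finset.HasAntidiagonal.antidiagonal m,
          TensorProduct.map (proj K C 𝒞 p.1) (proj K C 𝒞 p.2)
            (CoalgebraStruct.comul (R := K) x) := by
  induction x using DirectSum.Decomposition.inductionOn 𝒞 with
  | zero => simp
  | @homogeneous j y =>
    rw [sum_proj_tensor K C 𝒞 (fun p hp => Finset.HasAntidiagonal.mem_antidiagonal.mp hp)
      (hcomul j y y.2) m]
    by_cases hjm : j = m
    · subst hjm
      rw [proj_of_mem_same K C 𝒞 y.2, if_pos rfl]
    · rw [proj_of_mem_ne K C 𝒞 y.2 hjm, map_zero, if_neg hjm]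
  | add y z hy hz =>
    simp only [map_add, hy, hz, Finset.sum_add_distrib]

theorem redComul_one_eq {one : C} (hone : CoalgebraStruct.comul (R := K) one = one ⊗ₜ[K] one) :
    redComul K C one one = -(one ⊗ₜ[K] one) := by
  simp only [redComul, LinearMap.sub_apply, hone, TensorProduct.mk_apply, LinearMap.flip_apply,
    TensorProduct.mk_apply]
  abel

theorem redComul_proj_apply
    (hcomul : ∀ n : ℕ, ∀ x ∈ 𝒞 n,
      CoalgebraStruct.comul (R := K) x
        ∈ ⨆ p ∈ Finset.HasAntidiagonal.antidiagonal n, tensorSub K C (𝒞 p.1) (𝒞 p.2))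
    (h0 : Module.finrank K (𝒞 0) = 1)
    {one : C} (hone : CoalgebraStruct.comul (R := K) one = one ⊗ₜ[K] one)
    (hone0 : one ∈ 𝒞 0) (hone_ne : one ≠ 0)
    (m : ℕ) (x : C) :
    redComul K C one (proj K C 𝒞 m x)
      = ∑ p ∈ Finset.HasAntidiagonal.antidiagonal m,
          TensorProduct.map (proj K C 𝒞 p.1) (proj K C 𝒞 p.2) (redComul K C one x) := by
  induction x using DirectSum.Decomposition.inductionOn 𝒞 with
  | zero => simp
  | @homogeneous j y =>
    by_cases hj : j = 0
    · subst hj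
      -- y = c • one
      have hy0 : (y : C) ∈ Submodule.span K {one} := by
        rw [← czero_eq K C 𝒞 h0 hone0 hone_ne]; exact y.2
      obtain ⟨c, hc⟩ := Submodule.mem_span_singleton.mp hy0
      rw [← hc]
      by_cases hm : m = 0
      · subst hm
        rw [proj_of_mem_same K C 𝒞 (Submodule.smul_mem _ c hone0)]
        have : Finset.HasAntidiagonal.antidiagonal (0:ℕ) = {(0,0)} := rfl
        rw [this, Finset.sum_singleton]
        have heq : TensorProduct.map (proj K C 𝒞 0) (proj K C 𝒞 0)
            (redComul K C one one) = redComul K C one one := by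
          rw [redComul_one_eq K C hone, map_neg, TensorProduct.map_tmul,
            proj_of_mem_same K C 𝒞 hone0]
        simp only [map_smul]
        exact congrArg (c • ·) heq.symm
      · rw [proj_of_mem_ne K C 𝒞 (Submodule.smul_mem _ c hone0) (Ne.symm hm), map_zero]
        symm
        refine Finset.sum_eq_zero fun p hp => ?_
        rw [map_smul, map_smul, redComul_one_eq K C hone, map_neg, TensorProduct.map_tmul]
        rw [Finset.HasAntidiagonal.mem_antidiagonal] at hp
        rcases (show p.1 ≠ 0 ∨ p.2 ≠ 0 by omega) with h1 | h2
        · rw [proj_of_mem_ne K C 𝒞 hone0 (fun h => h1 h.symm)]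
          simp
        · rw [proj_of_mem_ne K C 𝒞 hone0 (fun h => h2 h.symm)]
          simp
    · have hred := (comul_homog K C 𝒞 hcomul h0 hone hone0 hone_ne hj y.2).2
      rw [sum_proj_tensor K C 𝒞
        (fun p hp => Finset.HasAntidiagonal.mem_antidiagonal.mp (Finset.mem_filter.mp hp).1) hred m]
      by_cases hjm : j = m
      · subst hjm
        rw [proj_of_mem_same K C 𝒞 y.2, if_pos rfl]
      · rw [proj_of_mem_ne K C 𝒞 y.2 hjm, map_zero, if_neg hjm]
  | add y z hy hz =>
    simp only [map_add, hy, hz, Finset.sum_add_distrib]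

-- ## projections on tensor powers

noncomputable def projT : (n : ℕ) → ℕ → (TP K C n →ₗ[K] TP K C n)
  | 0 => fun m => proj K C 𝒞 m
  | n+1 => fun m => ∑ p ∈ Finset.HasAntidiagonal.antidiagonal m,
      TensorProduct.map (projT n p.1) (proj K C 𝒞 p.2)

theorem iterD_comp_proj
    (hcomul : ∀ n : ℕ, ∀ x ∈ 𝒞 n,
      CoalgebraStruct.comul (R := K) x
        ∈ ⨆ p ∈ Finset.HasAntidiagonal.antidiagonal n, tensorSub K C (𝒞 p.1) (𝒞 p.2))
    (h0 : Module.finrank K (𝒞 0) = 1)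
    {one : C} (hone : CoalgebraStruct.comul (R := K) one = one ⊗ₜ[K] one)
    (hone0 : one ∈ 𝒞 0) (hone_ne : one ≠ 0) (n m : ℕ) :
    (iterD K C (redComul K C one) n) ∘ₗ proj K C 𝒞 m
      = projT K C 𝒞 n m ∘ₗ iterD K C (redComul K C one) n := by
  induction n generalizing m with
  | zero => rfl
  | succ n IH =>
    ext x
    show (TensorProduct.map (iterD K C (redComul K C one) n) LinearMap.id)
        (redComul K C one (proj K C 𝒞 m x))
      = projT K C 𝒞 (n+1) m ((TensorProduct.map (iterD K C (redComul K C one) n) LinearMap.id)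
          (redComul K C one x))
    rw [redComul_proj_apply K C 𝒞 hcomul h0 hone hone0 hone_ne m x, map_sum]
    show _ = (∑ p ∈ Finset.HasAntidiagonal.antidiagonal m,
        TensorProduct.map (projT K C 𝒞 n p.1) (proj K C 𝒞 p.2))
      ((TensorProduct.map (iterD K C (redComul K C one) n) LinearMap.id)
        (redComul K C one x))
    rw [LinearMap.sum_apply]
    refine Finset.sum_congr rfl fun p _ => ?_
    have hcomp : TensorProduct.map (iterD K C (redComul K C one) n) (LinearMap.id (M := C))
          ∘ₗ TensorProduct.map (proj K C 𝒞 p.1) (proj K C 𝒞 p.2)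
        = TensorProduct.map (projT K C 𝒞 n p.1) (proj K C 𝒞 p.2)
          ∘ₗ TensorProduct.map (iterD K C (redComul K C one) n) (LinearMap.id (M := C)) := by
      rw [← TensorProduct.map_comp, ← TensorProduct.map_comp, IH p.1,
        LinearMap.id_comp, LinearMap.comp_id]
    exact DFunLike.congr_fun hcomp (redComul K C one x)

theorem proj_mem_ker_iterD
    (hcomul : ∀ n : ℕ, ∀ x ∈ 𝒞 n,
      CoalgebraStruct.comul (R := K) x
        ∈ ⨆ p ∈ Finset.HasAntidiagonal.antidiagonal n, tensorSub K C (𝒞 p.1) (𝒞 p.2))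
    (h0 : Module.finrank K (𝒞 0) = 1)
    {one : C} (hone : CoalgebraStruct.comul (R := K) one = one ⊗ₜ[K] one)
    (hone0 : one ∈ 𝒞 0) (hone_ne : one ≠ 0) (n m : ℕ) {x : C}
    (hx : x ∈ LinearMap.ker (iterD K C (redComul K C one) n)) :
    proj K C 𝒞 m x ∈ LinearMap.ker (iterD K C (redComul K C one) n) := by
  rw [LinearMap.mem_ker] at hx ⊢
  have := DFunLike.congr_fun (iterD_comp_proj K C 𝒞 hcomul h0 hone hone0 hone_ne n m) x
  simp only [LinearMap.comp_apply] at this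
  rw [this, hx, map_zero]

-- ## convolution associativity and MpowL

theorem conv_assoc (f g h : Module.Dual K C) :
    convL K C (convL K C f g) h = convL K C f (convL K C g h) := by
  classical
  set Δ := (CoalgebraStruct.comul (R := K) (A := C)) with hΔ
  set A : (C ⊗[K] C) ⊗[K] C →ₗ[K] K :=
    LinearMap.mul' K K ∘ₗ TensorProduct.map (LinearMap.mul' K K ∘ₗ TensorProduct.map f g) h
    with hA
  set B : C ⊗[K] (C ⊗[K] C) →ₗ[K] K :=
    LinearMap.mul' K K ∘ₗ TensorProduct.map f (LinearMap.mul' K K ∘ₗ TensorProduct.map g h)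
    with hB
  have claim1 : LinearMap.mul' K K ∘ₗ TensorProduct.map (convL K C f g) h
      = A ∘ₗ TensorProduct.map Δ LinearMap.id := by
    apply TensorProduct.ext'
    intro a b
    simp [A, convL, LinearMap.mul'_apply, hΔ]
  have claim2 : LinearMap.mul' K K ∘ₗ TensorProduct.map f (convL K C g h)
      = B ∘ₗ TensorProduct.map LinearMap.id Δ := by
    apply TensorProduct.ext'
    intro a b
    simp [B, convL, LinearMap.mul'_apply, hΔ]
  have claim3 : A = B ∘ₗ (TensorProduct.assoc K C C C).toLinearMap := by
    apply TensorProduct.ext_threefold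
    intro a b c
    simp [A, B, LinearMap.mul'_apply, mul_assoc]
  ext x
  show (LinearMap.mul' K K) (TensorProduct.map (convL K C f g) h (Δ x))
    = (LinearMap.mul' K K) (TensorProduct.map f (convL K C g h) (Δ x))
  have l1 := DFunLike.congr_fun claim1 (Δ x)
  have l2 := DFunLike.congr_fun claim2 (Δ x)
  simp only [LinearMap.comp_apply] at l1 l2
  rw [l1, l2, claim3]
  simp only [LinearMap.comp_apply, LinearEquiv.coe_coe]
  congr 1
  have := Coalgebra.coassoc_apply (R := K) (A := C) x
  exact this

noncomputable def MpowL (one : C) : ℕ → Submodule K (Module.Dual K C)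
  | 0 => Mstar K C 𝒞 one
  | n + 1 => Submodule.map₂ (convL K C) (MpowL one n) (Mstar K C 𝒞 one)

theorem map₂_conv_assoc (A B D : Submodule K (Module.Dual K C)) :
    Submodule.map₂ (convL K C) (Submodule.map₂ (convL K C) A B) D
      = Submodule.map₂ (convL K C) A (Submodule.map₂ (convL K C) B D) := by
  apply le_antisymm
  · refine Submodule.map₂_le.mpr fun u hu d hd => ?_
    rw [Submodule.map₂_eq_span_image2] at hu
    induction hu using Submodule.span_induction with
    | mem u hu =>
      obtain ⟨a, ha, b, hb, rfl⟩ := hu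
      rw [conv_assoc]
      exact Submodule.apply_mem_map₂ _ ha (Submodule.apply_mem_map₂ _ hb hd)
    | zero => rw [LinearMap.map_zero₂]; exact Submodule.zero_mem _
    | add x y _ _ hx hy => rw [LinearMap.map_add₂]; exact Submodule.add_mem _ hx hy
    | smul c x _ hx => rw [LinearMap.map_smul₂]; exact Submodule.smul_mem _ c hx
  · refine Submodule.map₂_le.mpr fun a ha v hv => ?_
    rw [Submodule.map₂_eq_span_image2] at hv
    induction hv using Submodule.span_induction with
    | mem v hv =>
      obtain ⟨b, hb, d, hd, rfl⟩ := hv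
      rw [← conv_assoc]
      exact Submodule.apply_mem_map₂ _ (Submodule.apply_mem_map₂ _ ha hb) hd
    | zero => rw [map_zero]; exact Submodule.zero_mem _
    | add x y _ _ hx hy => rw [map_add]; exact Submodule.add_mem _ hx hy
    | smul c x _ hx => rw [map_smul]; exact Submodule.smul_mem _ c hx

theorem MpowL_swap (one : C) (n : ℕ) :
    Submodule.map₂ (convL K C) (Mstar K C 𝒞 one) (MpowL K C 𝒞 one n)
      = Submodule.map₂ (convL K C) (MpowL K C 𝒞 one n) (Mstar K C 𝒞 one) := by
  induction n with
  | zero => rfl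
  | succ n IH =>
    show Submodule.map₂ (convL K C) (Mstar K C 𝒞 one)
        (Submodule.map₂ (convL K C) (MpowL K C 𝒞 one n) (Mstar K C 𝒞 one)) = _
    rw [← map₂_conv_assoc, IH]
    rfl

theorem Mpow_eq_MpowL (one : C) (n : ℕ) : Mpow K C 𝒞 one n = MpowL K C 𝒞 one n := by
  induction n with
  | zero => rfl
  | succ n IH =>
    show Submodule.map₂ (convL K C) (Mstar K C 𝒞 one) (Mpow K C 𝒞 one n) = _
    rw [IH, MpowL_swap]
    rfl

theorem conv_comp_proj
    (hcomul : ∀ n : ℕ, ∀ x ∈ 𝒞 n,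
      CoalgebraStruct.comul (R := K) x
        ∈ ⨆ p ∈ Finset.HasAntidiagonal.antidiagonal n, tensorSub K C (𝒞 p.1) (𝒞 p.2))
    (f g : Module.Dual K C) (m : ℕ) :
    (convL K C f g) ∘ₗ proj K C 𝒞 m
      = ∑ p ∈ Finset.HasAntidiagonal.antidiagonal m,
          convL K C (f ∘ₗ proj K C 𝒞 p.1) (g ∘ₗ proj K C 𝒞 p.2) := by
  ext x
  rw [LinearMap.comp_apply, convL_apply, comul_proj_apply K C 𝒞 hcomul m x, map_sum, map_sum,
    LinearMap.sum_apply]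
  refine Finset.sum_congr rfl fun p _ => ?_
  rw [convL_apply]
  congr 1
  have : TensorProduct.map (f ∘ₗ proj K C 𝒞 p.1) (g ∘ₗ proj K C 𝒞 p.2)
      = TensorProduct.map f g ∘ₗ TensorProduct.map (proj K C 𝒞 p.1) (proj K C 𝒞 p.2) := by
    rw [← TensorProduct.map_comp]
  rw [this]
  rfl

theorem MpowL_comp_proj [FiniteDimensional K (𝒞 0)]
    (hcomul : ∀ n : ℕ, ∀ x ∈ 𝒞 n,
      CoalgebraStruct.comul (R := K) x
        ∈ ⨆ p ∈ Finset.HasAntidiagonal.antidiagonal n, tensorSub K C (𝒞 p.1) (𝒞 p.2))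
    (h0 : Module.finrank K (𝒞 0) = 1)
    {one : C} (hone0 : one ∈ 𝒞 0) (hone_ne : one ≠ 0) (n : ℕ) :
    ∀ f ∈ MpowL K C 𝒞 one n, ∀ m : ℕ, f ∘ₗ proj K C 𝒞 m ∈ MpowL K C 𝒞 one n := by
  induction n with
  | zero => exact fun f hf m => Mstar_comp_proj K C 𝒞 h0 hone0 hone_ne hf m
  | succ n IH =>
    intro f hf m
    have hf' : f ∈ Submodule.span K (Set.image2 (fun a b => convL K C a b)
        (MpowL K C 𝒞 one n : Set _) (Mstar K C 𝒞 one : Set _)) := by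
      rw [← Submodule.map₂_eq_span_image2]; exact hf
    clear hf
    induction hf' using Submodule.span_induction with
    | mem u hu =>
      obtain ⟨a, ha, b, hb, rfl⟩ := hu
      rw [conv_comp_proj K C 𝒞 hcomul a b m]
      refine Submodule.sum_mem _ fun p _ => ?_
      exact Submodule.apply_mem_map₂ _ (IH a ha p.1)
        (Mstar_comp_proj K C 𝒞 h0 hone0 hone_ne hb p.2)
    | zero => rw [LinearMap.zero_comp]; exact Submodule.zero_mem _
    | add x y _ _ hx hy => rw [LinearMap.add_comp]; exact Submodule.add_mem _ hx hy
    | smul c x _ hx => rw [LinearMap.smul_comp]; exact Submodule.smul_mem _ c hx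

-- ## easy direction

theorem MpowL_le [FiniteDimensional K (𝒞 0)]
    (hcomul : ∀ n : ℕ, ∀ x ∈ 𝒞 n,
      CoalgebraStruct.comul (R := K) x
        ∈ ⨆ p ∈ Finset.HasAntidiagonal.antidiagonal n, tensorSub K C (𝒞 p.1) (𝒞 p.2))
    {one : C} (hone : CoalgebraStruct.comul (R := K) one = one ⊗ₜ[K] one) (n : ℕ) :
    MpowL K C 𝒞 one n ≤ gradedDual K C 𝒞 ⊓ Submodule.dualAnnihilator
      (Submodule.span K {one} ⊔ LinearMap.ker (iterD K C (redComul K C one) n)) := by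
  induction n with
  | zero =>
    have hker : LinearMap.ker (iterD K C (redComul K C one) 0) = ⊥ := LinearMap.ker_id
    rw [hker, sup_bot_eq]
    exact le_rfl
  | succ n IH =>
    refine Submodule.map₂_le.mpr fun G hG E hE => ?_
    obtain ⟨hGD, hGann⟩ := Submodule.mem_inf.mp (IH hG)
    have hGone : G one = 0 := (Submodule.mem_dualAnnihilator G).mp hGann one
      (le_sup_left (a := Submodule.span K {one}) (Submodule.mem_span_singleton_self one))
    have hEone : E one = 0 := Mstar_apply_one K C hE
    refine Submodule.mem_inf.mpr ⟨conv_mem_gradedDual K C 𝒞 hcomul hGD hE.1, ?_⟩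
    rw [Submodule.dualAnnihilator_sup_eq, Submodule.mem_inf]
    constructor
    · rw [Submodule.mem_dualAnnihilator]
      intro w hw
      obtain ⟨c, rfl⟩ := Submodule.mem_span_singleton.mp hw
      rw [map_smul, convL_one K C hone, hGone, zero_mul, smul_zero]
    · rw [Submodule.mem_dualAnnihilator]
      intro x hx
      rw [LinearMap.mem_ker] at hx
      have hGker : G ∈ Submodule.dualAnnihilator
          (LinearMap.ker (iterD K C (redComul K C one) n)) := by
        rw [Submodule.mem_dualAnnihilator]
        intro w hw
        exact (Submodule.mem_dualAnnihilator G).mp hGann w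
          (le_sup_right (b := LinearMap.ker (iterD K C (redComul K C one) n)) hw)
      rw [← LinearMap.range_dualMap_eq_dualAnnihilator_ker] at hGker
      obtain ⟨Ghat, hGhat⟩ := hGker
      have hG' : G = Ghat ∘ₗ iterD K C (redComul K C one) n := by rw [← hGhat]; rfl
      rw [convL_red K C G E hGone hEone x, hG']
      have hsplit : TensorProduct.map (Ghat ∘ₗ iterD K C (redComul K C one) n) E
          = TensorProduct.map Ghat E ∘ₗ
            TensorProduct.map (iterD K C (redComul K C one) n) LinearMap.id := by
        rw [← TensorProduct.map_comp, LinearMap.comp_id]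
      rw [hsplit, LinearMap.comp_apply]
      have hx' : TensorProduct.map (iterD K C (redComul K C one) n) LinearMap.id
          (redComul K C one x) = 0 := hx
      rw [hx', map_zero, map_zero]

-- ## restricted tensor powers

noncomputable def UPM (U : Submodule K C) : ℕ → ModuleCat K
  | 0 => ModuleCat.of K U
  | n + 1 => ModuleCat.of K (UPM U n ⊗[K] U)

noncomputable abbrev UPT (U : Submodule K C) (n : ℕ) : Type := UPM K C U n

noncomputable def dIter (U : Submodule K C) (dU : U →ₗ[K] U ⊗[K] U) :
    (n : ℕ) → (U →ₗ[K] UPT K C U n)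
  | 0 => LinearMap.id
  | n + 1 => (TensorProduct.map (dIter U dU n) LinearMap.id).comp dU

noncomputable def Jmap (U : Submodule K C) : (n : ℕ) → (UPT K C U n →ₗ[K] TP K C n)
  | 0 => U.subtype
  | n + 1 => TensorProduct.map (Jmap U n) U.subtype

theorem UPT_fd (U : Submodule K C) [FiniteDimensional K U] (n : ℕ) :
    FiniteDimensional K (UPT K C U n) := by
  induction n with
  | zero => exact (inferInstance : FiniteDimensional K U)
  | succ n IH =>
    exact (inferInstance : FiniteDimensional K ((UPM K C U n : Type) ⊗[K] U))

theorem J_dIter (U : Submodule K C) (dU : U →ₗ[K] U ⊗[K] U) (one : C)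
    (hd : TensorProduct.map U.subtype U.subtype ∘ₗ dU = redComul K C one ∘ₗ U.subtype)
    (n : ℕ) :
    Jmap K C U n ∘ₗ dIter K C U dU n = iterD K C (redComul K C one) n ∘ₗ U.subtype := by
  induction n with
  | zero => rfl
  | succ n IH =>
    show TensorProduct.map (Jmap K C U n) U.subtype ∘ₗ
        (TensorProduct.map (dIter K C U dU n) LinearMap.id ∘ₗ dU)
      = (TensorProduct.map (iterD K C (redComul K C one) n) LinearMap.id ∘ₗ
          redComul K C one) ∘ₗ U.subtype
    have e1 : TensorProduct.map (Jmap K C U n) U.subtype ∘ₗ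
        TensorProduct.map (dIter K C U dU n) LinearMap.id
      = TensorProduct.map (iterD K C (redComul K C one) n) LinearMap.id ∘ₗ
        TensorProduct.map U.subtype U.subtype := by
      rw [← TensorProduct.map_comp, ← TensorProduct.map_comp, IH, LinearMap.comp_id,
        LinearMap.id_comp]
    rw [← LinearMap.comp_assoc, e1, LinearMap.comp_assoc, hd, ← LinearMap.comp_assoc]

-- ## extension of functionals from U to C

noncomputable def projS (j : ℕ) : C →ₗ[K] 𝒞 j :=
  (DirectSum.component K ℕ (fun i => (𝒞 i)) j) ∘ₗ (DirectSum.decomposeLinearEquiv 𝒞).toLinearMap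

theorem subtype_projS (j : ℕ) : (𝒞 j).subtype ∘ₗ projS K C 𝒞 j = proj K C 𝒞 j := rfl

theorem projS_of_mem_ne {j i : ℕ} {x : C} (h : x ∈ 𝒞 i) (hne : i ≠ j) :
    projS K C 𝒞 j x = 0 := by
  have := proj_of_mem_ne K C 𝒞 h hne
  rw [← subtype_projS] at this
  exact Subtype.ext this

theorem exists_extension [FiniteDimensional K (𝒞 0)]
    {one : C} (hone0 : one ∈ 𝒞 0)
    {U : Submodule K C}
    (s : Finset ℕ) (hs : 0 ∉ s) (hle : ∀ j ∈ s, 𝒞 j ≤ U)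
    (hU : ∀ u : U, ∑ j ∈ s, proj K C 𝒞 j (u : C) = (u : C))
    (β : Module.Dual K U) :
    ∃ E ∈ Mstar K C 𝒞 one, E ∘ₗ U.subtype = β := by
  classical
  refine ⟨β ∘ₗ ∑ j ∈ s.attach, Submodule.inclusion (hle j j.2) ∘ₗ projS K C 𝒞 j, ?_, ?_⟩
  · have : (β ∘ₗ ∑ j ∈ s.attach, Submodule.inclusion (hle j j.2) ∘ₗ projS K C 𝒞 j)
        = ∑ j ∈ s.attach, β ∘ₗ (Submodule.inclusion (hle j j.2) ∘ₗ projS K C 𝒞 j) := by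
      ext x; simp [LinearMap.sum_apply]
    rw [this]
    refine Submodule.sum_mem _ fun j _ => ?_
    refine dualComponent_le_Mstar K C 𝒞 (fun h => hs (h ▸ j.2)) hone0 ?_
    rw [mem_dualComponent_iff]
    intro i hi x hx
    simp only [LinearMap.comp_apply]
    rw [projS_of_mem_ne K C 𝒞 hx hi]
    simp
  · ext u
    simp only [LinearMap.comp_apply, Submodule.coe_subtype]
    have hρu : ((∑ j ∈ s.attach, Submodule.inclusion (hle j j.2) ∘ₗ projS K C 𝒞 j) (u : C)) = u := by
      apply Subtype.ext
      rw [LinearMap.sum_apply]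
      rw [show ((∑ j ∈ s.attach, (Submodule.inclusion (hle j j.2) ∘ₗ projS K C 𝒞 j) (u : C) : U) : C)
        = ∑ j ∈ s.attach, (((Submodule.inclusion (hle j j.2) ∘ₗ projS K C 𝒞 j) (u : C) : U) : C)
        from by push_cast; rfl]
      have heq : ∀ j ∈ s.attach,
          ((((Submodule.inclusion (hle j j.2) ∘ₗ projS K C 𝒞 j) (u : C)) : U) : C)
            = proj K C 𝒞 j (u : C) := fun j _ => rfl
      rw [Finset.sum_congr rfl heq,
        Finset.sum_attach s (fun j => proj K C 𝒞 j (u : C))]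
      exact hU u
    rw [hρu]

-- ## key claim

theorem key_claim [FiniteDimensional K (𝒞 0)]
    (hcomul : ∀ n : ℕ, ∀ x ∈ 𝒞 n,
      CoalgebraStruct.comul (R := K) x
        ∈ ⨆ p ∈ Finset.HasAntidiagonal.antidiagonal n, tensorSub K C (𝒞 p.1) (𝒞 p.2))
    {one : C} (hone : CoalgebraStruct.comul (R := K) one = one ⊗ₜ[K] one)
    (hone0 : one ∈ 𝒞 0)
    {U : Submodule K C} [FiniteDimensional K U]
    (s : Finset ℕ) (hs : 0 ∉ s) (hle : ∀ j ∈ s, 𝒞 j ≤ U)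
    (hU : ∀ u : U, ∑ j ∈ s, proj K C 𝒞 j (u : C) = (u : C))
    (dU : U →ₗ[K] U ⊗[K] U)
    (hd : TensorProduct.map U.subtype U.subtype ∘ₗ dU = redComul K C one ∘ₗ U.subtype)
    (n : ℕ) (ψ : Module.Dual K (UPT K C U n)) :
    ∃ F ∈ MpowL K C 𝒞 one n, F ∘ₗ U.subtype = ψ ∘ₗ dIter K C U dU n := by
  induction n with
  | zero =>
    obtain ⟨E, hE, hEq⟩ := exists_extension K C 𝒞 hone0 s hs hle hU (ψ : Module.Dual K U)
    exact ⟨E, hE, hEq⟩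
  | succ n IH =>
    haveI := UPT_fd K C U n
    set e := TensorProduct.dualDistribEquiv (R := K) (M := UPT K C U n) (N := U) with he
    suffices h : ∀ w : Module.Dual K (UPT K C U n) ⊗[K] Module.Dual K U,
        ∃ F ∈ MpowL K C 𝒞 one (n+1),
          F ∘ₗ U.subtype = (e w : Module.Dual K (UPT K C U n ⊗[K] U)) ∘ₗ
            dIter K C U dU (n+1) by
      obtain ⟨F, hF, hFeq⟩ := h (e.symm ψ)
      refine ⟨F, hF, ?_⟩
      rw [hFeq]; ext u; exact congrArg (fun φ => φ (dIter K C U dU (n+1) u)) (e.apply_symm_apply ψ)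
    intro w
    induction w using TensorProduct.induction_on with
    | zero =>
      refine ⟨0, Submodule.zero_mem _, ?_⟩
      rw [map_zero]
      ext u
      simp
      rfl
    | tmul γ β =>
      obtain ⟨G, hG, hGeq⟩ := IH γ
      obtain ⟨E, hE, hEeq⟩ := exists_extension K C 𝒞 hone0 s hs hle hU β
      refine ⟨convL K C G E, Submodule.apply_mem_map₂ _ hG hE, ?_⟩
      have hGone : G one = 0 := by
        have hmem := Submodule.mem_inf.mp (MpowL_le K C 𝒞 hcomul hone n hG)
        exact (Submodule.mem_dualAnnihilator G).mp hmem.2 one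
          (le_sup_left (a := Submodule.span K {one}) (Submodule.mem_span_singleton_self one))
      have hEone : E one = 0 := Mstar_apply_one K C hE
      ext u
      simp only [LinearMap.comp_apply, Submodule.coe_subtype]
      rw [convL_red K C G E hGone hEone]
      have hdu : redComul K C one (u : C) = TensorProduct.map U.subtype U.subtype (dU u) :=
        (DFunLike.congr_fun hd u).symm
      rw [hdu]
      have hsplit : TensorProduct.map G E ∘ₗ TensorProduct.map U.subtype U.subtype
          = TensorProduct.map γ β ∘ₗ
            TensorProduct.map (dIter K C U dU n) (LinearMap.id (M := U)) := by
        rw [← TensorProduct.map_comp, ← TensorProduct.map_comp, hGeq, hEeq, LinearMap.comp_id]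
      have := DFunLike.congr_fun hsplit (dU u)
      simp only [LinearMap.comp_apply] at this
      rw [this]
      have hfinal : ∀ t : UPT K C U n ⊗[K] U,
          LinearMap.mul' K K (TensorProduct.map γ β t)
            = (e (γ ⊗ₜ[K] β) : Module.Dual K (UPT K C U n ⊗[K] U)) t := by
        intro t
        induction t using TensorProduct.induction_on with
        | zero => simp
        | tmul a b =>
          simp [he, LinearMap.mul'_apply, TensorProduct.dualDistribEquiv,
            TensorProduct.dualDistribEquivOfBasis, TensorProduct.dualDistrib_apply]
        | add a b ha hb => simp only [map_add, ha, hb]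
      rw [hfinal]
      rfl
    | add w1 w2 h1 h2 =>
      obtain ⟨F1, hF1, hF1eq⟩ := h1
      obtain ⟨F2, hF2, hF2eq⟩ := h2
      refine ⟨F1 + F2, Submodule.add_mem _ hF1 hF2, ?_⟩
      rw [map_add, LinearMap.add_comp, hF1eq, hF2eq]
      ext u
      simp [LinearMap.add_apply]
      rfl

-- ## hard direction, homogeneous case

theorem homog_le [FiniteDimensional K (𝒞 0)]
    (hcomul : ∀ n : ℕ, ∀ x ∈ 𝒞 n,
      CoalgebraStruct.comul (R := K) x
        ∈ ⨆ p ∈ Finset.HasAntidiagonal.antidiagonal n, tensorSub K C (𝒞 p.1) (𝒞 p.2))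
    (h0 : Module.finrank K (𝒞 0) = 1)
    {one : C} (hone : CoalgebraStruct.comul (R := K) one = one ⊗ₜ[K] one)
    (hone0 : one ∈ 𝒞 0) (hone_ne : one ≠ 0)
    (n : ℕ) {m : ℕ} (hm : m ≠ 0) {φ : Module.Dual K C}
    (hφc : φ ∈ dualComponent K C 𝒞 m)
    (hφa : φ ∈ Submodule.dualAnnihilator
      (Submodule.span K {one} ⊔ LinearMap.ker (iterD K C (redComul K C one) n))) :
    φ ∈ MpowL K C 𝒞 one n := by
  classical
  set s : Finset ℕ := Finset.Icc 1 m with hsdef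
  have hs : 0 ∉ s := by simp [hsdef]
  set U : Submodule K C := ⨆ j ∈ s, 𝒞 j with hUdef
  have hle : ∀ j ∈ s, 𝒞 j ≤ U := fun j hj => le_iSup₂ (f := fun j (_ : j ∈ s) => 𝒞 j) j hj
  haveI hfdU : FiniteDimensional K U := by
    have h1 : FiniteDimensional K (s.sup 𝒞 : Submodule K C) :=
      Submodule.finiteDimensional_finset_sup s 𝒞
    have h2 : s.sup 𝒞 = U := by rw [hUdef, Finset.sup_eq_iSup]
    rw [← h2]
    exact h1
  have hUsum : ∀ u : U, ∑ j ∈ s, proj K C 𝒞 j (u : C) = (u : C) := by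
    intro u
    obtain ⟨μ, hμ⟩ := (Submodule.mem_iSup_finset_iff_exists_sum _ _).mp u.2
    have hproj : ∀ j ∈ s, proj K C 𝒞 j (u : C) = (μ j : C) := by
      intro j hj
      rw [← hμ, map_sum, Finset.sum_eq_single_of_mem j hj]
      · exact proj_of_mem_same K C 𝒞 (μ j).2
      · intro i _ hij
        exact proj_of_mem_ne K C 𝒞 (μ i).2 hij
    rw [Finset.sum_congr rfl hproj, hμ]
  -- the restricted reduced comultiplication
  have hred : ∀ u : U, redComul K C one (u : C) ∈ tensorSub K C U U := by
    have : U ≤ Submodule.comap (redComul K C one) (tensorSub K C U U) := by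
      refine iSup₂_le fun j hj => fun x hx => ?_
      have hj1 : j ≠ 0 := by
        intro h; exact hs (h ▸ hj)
      have hmem := (comul_homog K C 𝒞 hcomul h0 hone hone0 hone_ne hj1 hx).2
      rw [Submodule.mem_comap]
      have hsub : (⨆ p ∈ Finset.filter (fun p : ℕ × ℕ => p.1 ≠ 0 ∧ p.2 ≠ 0)
          (Finset.HasAntidiagonal.antidiagonal j), tensorSub K C (𝒞 p.1) (𝒞 p.2)) ≤ tensorSub K C U U := by
        refine iSup₂_le fun p hp => ?_
        rw [Finset.mem_filter, Finset.HasAntidiagonal.mem_antidiagonal] at hp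
        have hsj : j ≤ m := by
          rw [hsdef] at hj; exact (Finset.mem_Icc.mp hj).2
        refine tensorSub_mono K C (hle p.1 ?_) (hle p.2 ?_)
        · rw [hsdef, Finset.mem_Icc]; omega
        · rw [hsdef, Finset.mem_Icc]; omega
      exact hsub hmem
    exact fun u => Submodule.mem_comap.mp (this u.2)
  -- construct dU
  obtain ⟨σ, hσ⟩ := LinearMap.exists_rightInverse_of_surjective
    (TensorProduct.map U.subtype U.subtype).rangeRestrict
    (LinearMap.range_rangeRestrict _)
  set r : U →ₗ[K] LinearMap.range (TensorProduct.map U.subtype U.subtype) :=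
    LinearMap.codRestrict _ (redComul K C one ∘ₗ U.subtype) (fun u => hred u) with hr
  set dU : U →ₗ[K] U ⊗[K] U := σ ∘ₗ r with hdU
  have hd : TensorProduct.map U.subtype U.subtype ∘ₗ dU = redComul K C one ∘ₗ U.subtype := by
    ext u
    have h1 : TensorProduct.map U.subtype U.subtype (σ (r u))
        = ((TensorProduct.map U.subtype U.subtype).rangeRestrict (σ (r u)) :
            C ⊗[K] C) := rfl
    simp only [LinearMap.comp_apply, hdU]
    have h2 := DFunLike.congr_fun hσ (r u)
    simp only [LinearMap.comp_apply, LinearMap.id_apply] at h2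
    rw [h1, h2]
    rfl
  -- φ' kills ker (dIter dU n)
  have hφ' : (φ ∘ₗ U.subtype) ∈ Submodule.dualAnnihilator
      (LinearMap.ker (dIter K C U dU n)) := by
    rw [Submodule.mem_dualAnnihilator]
    intro w hw
    rw [LinearMap.mem_ker] at hw
    have hiter : iterD K C (redComul K C one) n ((w : C)) = 0 := by
      have := DFunLike.congr_fun (J_dIter K C U dU one hd n) w
      simp only [LinearMap.comp_apply, Submodule.coe_subtype] at this
      rw [← this, hw, map_zero]
    exact (Submodule.mem_dualAnnihilator φ).mp hφa (w : C)
      (le_sup_right (b := LinearMap.ker (iterD K C (redComul K C one) n))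
        (LinearMap.mem_ker.mpr hiter))
  rw [← LinearMap.range_dualMap_eq_dualAnnihilator_ker] at hφ'
  obtain ⟨ψ, hψ⟩ := hφ'
  obtain ⟨F, hF, hFeq⟩ := key_claim K C 𝒞 hcomul hone hone0 s hs hle hUsum dU hd n ψ
  -- φ = F ∘ₗ proj m
  have hφF : φ = F ∘ₗ proj K C 𝒞 m := by
    ext x
    have hmemU : proj K C 𝒞 m x ∈ U :=
      hle m (by rw [hsdef, Finset.mem_Icc]; omega) (proj_mem K C 𝒞 m x)
    have h1 : F (proj K C 𝒞 m x) = φ (proj K C 𝒞 m x) := by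
      have := DFunLike.congr_fun hFeq (⟨proj K C 𝒞 m x, hmemU⟩ : U)
      simp only [LinearMap.comp_apply, Submodule.coe_subtype] at this
      rw [this]
      have := DFunLike.congr_fun hψ (⟨proj K C 𝒞 m x, hmemU⟩ : U)
      exact this
    have h2 : φ (proj K C 𝒞 m x) = φ x :=
      DFunLike.congr_fun (comp_comp_proj_same K C 𝒞 hφc) x
    simp only [LinearMap.comp_apply]
    rw [h1, h2]
  rw [hφF]
  exact MpowL_comp_proj K C 𝒞 hcomul h0 hone0 hone_ne n F hF m

end Mine

theorem stmt_8 (𝒞 : ℕ → Submodule K C) [DirectSum.Decomposition 𝒞]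
    [∀ n, FiniteDimensional K (𝒞 n)]
    (hcomul : ∀ n : ℕ, ∀ x ∈ 𝒞 n,
      CoalgebraStruct.comul (R := K) x
        ∈ ⨆ p ∈ Finset.HasAntidiagonal.antidiagonal n, tensorSub K C (𝒞 p.1) (𝒞 p.2))
    (h0 : Module.finrank K (𝒞 0) = 1)
    (one : C) (hone : CoalgebraStruct.comul (R := K) one = one ⊗ₜ[K] one)
    (hone0 : one ∈ 𝒞 0) (hone_ne : one ≠ 0) :
    ∀ n : ℕ,
      gradedDual K C 𝒞 ⊓ Submodule.dualAnnihilator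
          (Submodule.span K {one} ⊔ LinearMap.ker (iterD K C (redComul K C one) n))
        = Mpow K C 𝒞 one n := by
  intro n
  apply le_antisymm
  · intro φ hφ
    rw [Mpow_eq_MpowL K C 𝒞 one n]
    obtain ⟨hφD, hφa⟩ := Submodule.mem_inf.mp hφ
    obtain ⟨s, hφsum⟩ := gradedDual_decompose K C 𝒞 hφD
    rw [hφsum]
    refine Submodule.sum_mem _ fun j _ => ?_
    have hann : φ ∘ₗ proj K C 𝒞 j ∈ Submodule.dualAnnihilator
        (Submodule.span K {one} ⊔ LinearMap.ker (iterD K C (redComul K C one) n)) := by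
      rw [Submodule.mem_dualAnnihilator]
      intro w hw
      obtain ⟨a, ha, b, hb, rfl⟩ := Submodule.mem_sup.mp hw
      obtain ⟨c, rfl⟩ := Submodule.mem_span_singleton.mp ha
      simp only [LinearMap.comp_apply, map_add]
      have h1 : proj K C 𝒞 j (c • one) ∈ Submodule.span K {one} := by
        rw [map_smul]
        by_cases hj : j = 0
        · subst hj
          rw [proj_of_mem_same K C 𝒞 hone0]
          exact Submodule.smul_mem _ c (Submodule.mem_span_singleton_self one)
        · rw [proj_of_mem_ne K C 𝒞 hone0 (Ne.symm hj), smul_zero]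
          exact Submodule.zero_mem _
      have h2 : proj K C 𝒞 j b ∈ LinearMap.ker (iterD K C (redComul K C one) n) :=
        proj_mem_ker_iterD K C 𝒞 hcomul h0 hone hone0 hone_ne n j hb
      rw [(Submodule.mem_dualAnnihilator φ).mp hφa _ (le_sup_left
          (a := Submodule.span K {one}) h1),
        (Submodule.mem_dualAnnihilator φ).mp hφa _ (le_sup_right
          (b := LinearMap.ker (iterD K C (redComul K C one) n)) h2),
        add_zero]
    by_cases hj : j = 0
    · subst hj
      have hzero : φ ∘ₗ proj K C 𝒞 0 = 0 := by
        ext x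
        have hmem : proj K C 𝒞 0 x ∈ Submodule.span K {one} := by
          rw [← czero_eq K C 𝒞 h0 hone0 hone_ne]
          exact proj_mem K C 𝒞 0 x
        exact (Submodule.mem_dualAnnihilator φ).mp hφa _ (le_sup_left
          (a := Submodule.span K {one}) hmem)
      rw [hzero]
      exact Submodule.zero_mem _
    · exact homog_le K C 𝒞 hcomul h0 hone hone0 hone_ne n hj
        (comp_proj_mem K C 𝒞 φ j) hann
  · rw [Mpow_eq_MpowL K C 𝒞 one n]
    exact MpowL_le K C 𝒞 hcomul hone n
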